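/- Let u and v be nonzero Laurent polynomials over ℂ having symmetry with types ε_u z^{c_u} and ε_v z^{c_v}, and suppose v(z)v⋆(z) divides u(z)u⋆(z) in ℂ[z,z^{−1}]. Then there exists a Laurent polynomial d having symmetry such that d(z)d⋆(z) = u(z)u⋆(z)/(v(z)v⋆(z)). Moreover, every Laurent polynomial d having symmetry that satisfies d(z)d⋆(z) = u(z)u⋆(z)/(v(z)v⋆(z)) has symmetry type ε_uε_v z^{2k + c_u − c_v} for some k ∈ ℤ. -/

import Mathlib

open LaurentPolynomial Matrix
open scoped Classical

noncomputable section

abbrev LP := LaurentPolynomial ℂ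

namespace QT

/-- The coefficient of `z^k` in a Laurent polynomial. -/
def coeff (u : LP) (k : ℤ) : ℂ := (show ℤ →₀ ℂ from AddMonoidAlgebra.coeff u) k

/-- The Hermitian conjugate `u⋆(z) = Σ conj(u(k)) z^{-k}`. -/
def hstar (u : LP) : LP :=
  AddMonoidAlgebra.ofCoeff <| show ℤ →₀ ℂ from
    Finsupp.mapDomain (fun k => -k)
      (Finsupp.mapRange (starRingEnd ℂ) (map_zero _) (show ℤ →₀ ℂ from AddMonoidAlgebra.coeff u))

/-- `u` has symmetry with type `ε z^c`, i.e. `u(k) = ε u(c-k)` for all `k`. -/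
def SymT (u : LP) (ε : ℂ) (c : ℤ) : Prop := ∀ k : ℤ, coeff u k = ε * coeff u (c - k)

def Sgn (ε : ℂ) : Prop := ε = 1 ∨ ε = -1

/-- `u` has symmetry (with some type). -/
def HasSym (u : LP) : Prop := ∃ ε c, Sgn ε ∧ SymT u ε c

/-- The Laurent polynomial `z - a`. -/
def zsub (a : ℂ) : LP := T 1 - LaurentPolynomial.C a

/-- `m` is the multiplicity of `z₀` as a zero of `u`. -/
def mzIs (u : LP) (z₀ : ℂ) (m : ℕ) : Prop := zsub z₀ ^ m ∣ u ∧ ¬ zsub z₀ ^ (m + 1) ∣ u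

/-- The multiplicity of `z₀` as a zero of `u`, as a function. -/
def mzF (u : LP) (z₀ : ℂ) : ℕ := sSup {m : ℕ | zsub z₀ ^ m ∣ u}

/-- The difference-of-(Hermitian)-squares property with respect to symmetry type `ε z^c`. -/
def DOS (u : LP) (ε : ℂ) (c : ℤ) : Prop :=
  ∃ (u₁ u₂ : LP) (ε₁ ε₂ : ℂ) (c₁ c₂ : ℤ),
    Sgn ε₁ ∧ Sgn ε₂ ∧ SymT u₁ ε₁ c₁ ∧ SymT u₂ ε₂ c₂ ∧
    u₁ * hstar u₁ - u₂ * hstar u₂ = u ∧ ε₁ * ε₂ = ε ∧ c₁ - c₂ = c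

/-- Degree: the largest exponent with nonzero coefficient (0 for the zero polynomial). -/
def degL (u : LP) : ℤ :=
  if h : u = 0 then 0
  else (show ℤ →₀ ℂ from AddMonoidAlgebra.coeff u).support.max' (Finsupp.support_nonempty_iff.mpr (mt AddMonoidAlgebra.coeff_eq_zero.mp h))

/-- Lower degree: the smallest exponent with nonzero coefficient (0 for zero). -/
def ldegL (u : LP) : ℤ :=
  if h : u = 0 then 0
  else (show ℤ →₀ ℂ from AddMonoidAlgebra.coeff u).support.min' (Finsupp.support_nonempty_iff.mpr (mt AddMonoidAlgebra.coeff_eq_zero.mp h))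

/-- Length `deg - ldeg`, with `len 0 = ⊥`. -/
def lenL (u : LP) : WithBot ℤ := if u = 0 then ⊥ else ((degL u - ldegL u : ℤ) : WithBot ℤ)

/-- `g` is a greatest common divisor of `a` and `b`. -/
def IsGCD2 (g a b : LP) : Prop := g ∣ a ∧ g ∣ b ∧ ∀ e : LP, e ∣ a → e ∣ b → e ∣ g

/-- `g` is a greatest common divisor of `a`, `b`, `c`, `d`. -/
def IsGCD4 (g a b c d : LP) : Prop :=
  g ∣ a ∧ g ∣ b ∧ g ∣ c ∧ g ∣ d ∧ ∀ e : LP, e ∣ a → e ∣ b → e ∣ c → e ∣ d → e ∣ g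

/-- The Hermitian conjugate transpose of a matrix of Laurent polynomials. -/
def hstarM (A : Matrix (Fin 2) (Fin 2) LP) : Matrix (Fin 2) (Fin 2) LP :=
  fun i j => hstar (A j i)

def IsHerm (A : Matrix (Fin 2) (Fin 2) LP) : Prop := hstarM A = A

/-- `diag(1, -1)`. -/
def Jmat : Matrix (Fin 2) (Fin 2) LP := Matrix.diagonal ![1, -1]

/-- A square matrix of Laurent polynomials is strongly invertible if its determinant is a
nonzero monomial. -/
def StrongInv (A : Matrix (Fin 2) (Fin 2) LP) : Prop :=
  ∃ (lam : ℂ) (k : ℤ), lam ≠ 0 ∧ A.det = LaurentPolynomial.C lam * T k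

/-- Compatible symmetry for a `2×2` matrix of Laurent polynomials. -/
def CompatSym (A : Matrix (Fin 2) (Fin 2) LP) : Prop :=
  ∃ (ε ε' : Fin 2 → ℂ) (c c' : Fin 2 → ℤ),
    (∀ j, Sgn (ε j)) ∧ (∀ k, Sgn (ε' k)) ∧
    ∀ j k, SymT (A j k) (ε j * ε' k) (c' k - c j)

/-- Substitution `z ↦ z²`. -/
def sqDom (u : LP) : LP :=
  AddMonoidAlgebra.ofCoeff <| show ℤ →₀ ℂ from Finsupp.mapDomain (fun k => 2 * k) (show ℤ →₀ ℂ from AddMonoidAlgebra.coeff u)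

/-- Substitution `z ↦ -z`. -/
def negSub (u : LP) : LP :=
  (show ℤ →₀ ℂ from AddMonoidAlgebra.coeff u).sum fun k c => show LP from AddMonoidAlgebra.ofCoeff (Finsupp.single k ((-1 : ℂ) ^ k * c))

/-- The `γ`-coset `u^{[γ]}(z) = Σ_k u(γ + 2k) z^k`. -/
def cosetL (u : LP) (γ : ℤ) : LP :=
  AddMonoidAlgebra.ofCoeff <| show ℤ →₀ ℂ from
    Finsupp.comapDomain (fun k : ℤ => γ + 2 * k) (show ℤ →₀ ℂ from AddMonoidAlgebra.coeff u)
      (by intro a _ b _ h; simp only at h; omega)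

/-- Evaluation of a Laurent polynomial at a point. -/
def evalL (u : LP) (z : ℂ) : ℂ := (show ℤ →₀ ℂ from AddMonoidAlgebra.coeff u).sum fun k c => c * z ^ k

/-- `{a; b₁, b₂}_{Θ,(1,-1)}` is a quasi-tight framelet filter bank. -/
def QTFB (a Θ b₁ b₂ : LP) : Prop :=
  sqDom Θ * hstar a * a + hstar b₁ * b₁ - hstar b₂ * b₂ = Θ ∧
  sqDom Θ * hstar a * negSub a + hstar b₁ * negSub b₁ - hstar b₂ * negSub b₂ = 0

/-- The matrix `N_{a,Θ|n_b}` built from the quotients `A`, `B`. -/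
def Nmat (A B : LP) : Matrix (Fin 2) (Fin 2) LP :=
  LaurentPolynomial.C (2 : ℂ)⁻¹ •
    !![cosetL A 0 + cosetL B 0, cosetL A 1 - cosetL B 1;
       T 1 * (cosetL A 1 + cosetL B 1), cosetL A 0 - cosetL B 0]

/-! ### Auxiliary development -/

section Aux

lemma lp_ext {a b : LP} (h : ∀ k, coeff a k = coeff b k) : a = b :=
  AddMonoidAlgebra.coeff_injective (Finsupp.ext h)

lemma coeff_add (a b : LP) (k : ℤ) : coeff (a + b) k = coeff a k + coeff b k := by
  show (a + b).coeff k = a.coeff k + b.coeff k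
  rw [AddMonoidAlgebra.coeff_add]; rfl

lemma coeff_single (n : ℤ) (c : ℂ) (k : ℤ) :
    coeff (AddMonoidAlgebra.single n c : LP) k = if n = k then c else 0 := by
  show (Finsupp.single n c : ℤ →₀ ℂ) k = _; exact Finsupp.single_apply

lemma coeff_single_mul (n : ℤ) (c : ℂ) (a : LP) (k : ℤ) :
    coeff (AddMonoidAlgebra.single n c * a) k = c * coeff a (-n + k) :=
  AddMonoidAlgebra.coeff_single_mul_apply a c n k

lemma coeff_hstar (a : LP) (k : ℤ) :
    coeff (hstar a) k = (starRingEnd ℂ) (coeff a (-k)) := by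
  show Finsupp.mapDomain (fun k : ℤ => -k)
    (Finsupp.mapRange (starRingEnd ℂ) (map_zero _) a.coeff) k = _
  have : (fun k : ℤ => -k) = ⇑(Equiv.neg ℤ) := rfl
  rw [this, Finsupp.mapDomain_equiv_apply]
  simp [Finsupp.mapRange_apply, coeff]

lemma hstar_zero : hstar 0 = 0 := by
  apply lp_ext; intro k; rw [coeff_hstar]; simp [coeff]

lemma hstar_add (a b : LP) : hstar (a + b) = hstar a + hstar b := by
  apply lp_ext; intro k
  rw [coeff_add, coeff_hstar, coeff_hstar, coeff_hstar, coeff_add, map_add]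

lemma hstar_single (n : ℤ) (c : ℂ) :
    hstar (AddMonoidAlgebra.single n c : LP) = AddMonoidAlgebra.single (-n) ((starRingEnd ℂ) c) := by
  apply lp_ext; intro k
  rw [coeff_hstar, coeff_single, coeff_single]
  rcases eq_or_ne n (-k) with h | h
  · simp [h]
  · rw [if_neg h, if_neg (by omega), map_zero]

lemma hstar_mul (a b : LP) : hstar (a * b) = hstar a * hstar b := by
  induction a using AddMonoidAlgebra.induction_linear with
  | zero => rw [zero_mul, hstar_zero, zero_mul]
  | add f g hf hg => rw [add_mul, hstar_add, hstar_add, hf, hg, add_mul]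
  | single n c =>
    rw [hstar_single]
    apply lp_ext; intro k
    rw [coeff_hstar, coeff_single_mul, coeff_single_mul, _root_.map_mul, coeff_hstar]
    congr 3
    omega

lemma hstar_one : hstar 1 = 1 := by
  have : (1 : LP) = AddMonoidAlgebra.single 0 1 := rfl
  rw [this, hstar_single]
  simp

/-- `hstar` as a ring homomorphism. -/
def hstarRH : LP →+* LP where
  toFun := hstar
  map_one' := hstar_one
  map_mul' := hstar_mul
  map_zero' := hstar_zero
  map_add' := hstar_add

lemma hstar_hstar (a : LP) : hstar (hstar a) = a := by
  apply lp_ext; intro k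
  rw [coeff_hstar, coeff_hstar, neg_neg]
  exact Complex.conj_conj _

lemma hstar_eq_zero {a : LP} (h : hstar a = 0) : a = 0 := by
  rw [← hstar_hstar a, h, hstar_zero]

lemma hstar_ne_zero {a : LP} (h : a ≠ 0) : hstar a ≠ 0 := fun hh => h (hstar_eq_zero hh)

/-- Reflection `z ↦ z⁻¹` on Laurent polynomials. -/
def reflLP (a : LP) : LP :=
  AddMonoidAlgebra.ofCoeff <| show ℤ →₀ ℂ from Finsupp.mapDomain (fun k => -k) (show ℤ →₀ ℂ from AddMonoidAlgebra.coeff a)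

lemma coeff_refl (a : LP) (k : ℤ) : coeff (reflLP a) k = coeff a (-k) := by
  show Finsupp.mapDomain (fun k : ℤ => -k) a.coeff k = _
  have : (fun k : ℤ => -k) = ⇑(Equiv.neg ℤ) := rfl
  rw [this, Finsupp.mapDomain_equiv_apply]
  rfl

lemma refl_single (n : ℤ) (c : ℂ) :
    reflLP (AddMonoidAlgebra.single n c : LP) = AddMonoidAlgebra.single (-n) c := by
  apply lp_ext; intro k
  rw [coeff_refl, coeff_single, coeff_single]
  rcases eq_or_ne n (-k) with h | h
  · simp [h]
  · rw [if_neg h, if_neg (by omega)]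

lemma refl_zero : reflLP 0 = 0 := by
  apply lp_ext; intro k; rw [coeff_refl]; simp [coeff]

lemma refl_add (a b : LP) : reflLP (a + b) = reflLP a + reflLP b := by
  apply lp_ext; intro k
  rw [coeff_add, coeff_refl, coeff_refl, coeff_refl, coeff_add]

lemma refl_mul (a b : LP) : reflLP (a * b) = reflLP a * reflLP b := by
  induction a using AddMonoidAlgebra.induction_linear with
  | zero => rw [zero_mul, refl_zero, zero_mul]
  | add f g hf hg => rw [add_mul, refl_add, refl_add, hf, hg, add_mul]
  | single n c =>
    rw [refl_single]
    apply lp_ext; intro k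
    rw [coeff_refl, coeff_single_mul, coeff_single_mul, coeff_refl]
    congr 2
    omega

lemma refl_refl (a : LP) : reflLP (reflLP a) = a := by
  apply lp_ext; intro k
  rw [coeff_refl, coeff_refl, neg_neg]

lemma refl_eq_zero {a : LP} (h : reflLP a = 0) : a = 0 := by
  rw [← refl_refl a, h, refl_zero]

lemma refl_ne_zero {a : LP} (h : a ≠ 0) : reflLP a ≠ 0 := fun hh => h (refl_eq_zero hh)

lemma refl_dvd {a b : LP} (h : a ∣ b) : reflLP a ∣ reflLP b := by
  obtain ⟨c, rfl⟩ := h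
  exact ⟨reflLP c, refl_mul a c⟩

end Aux
section Deg

lemma coeff_degL {a : LP} (ha : a ≠ 0) : coeff a (degL a) ≠ 0 := by
  rw [degL, dif_neg ha]
  exact Finsupp.mem_support_iff.mp (Finset.max'_mem _ _)

lemma coeff_ldegL {a : LP} (ha : a ≠ 0) : coeff a (ldegL a) ≠ 0 := by
  rw [ldegL, dif_neg ha]
  exact Finsupp.mem_support_iff.mp (Finset.min'_mem _ _)

lemma le_degL {a : LP} {k : ℤ} (hk : coeff a k ≠ 0) : k ≤ degL a := by
  have ha : a ≠ 0 := by rintro rfl; exact hk rfl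
  rw [degL, dif_neg ha]
  exact Finset.le_max' _ _ (Finsupp.mem_support_iff.mpr hk)

lemma ldegL_le {a : LP} {k : ℤ} (hk : coeff a k ≠ 0) : ldegL a ≤ k := by
  have ha : a ≠ 0 := by rintro rfl; exact hk rfl
  rw [ldegL, dif_neg ha]
  exact Finset.min'_le _ _ (Finsupp.mem_support_iff.mpr hk)

lemma ldegL_le_degL {a : LP} (ha : a ≠ 0) : ldegL a ≤ degL a :=
  ldegL_le (coeff_degL ha)

lemma coeff_eq_zero_of_degL_lt {a : LP} {k : ℤ} (h : degL a < k) : coeff a k = 0 := by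
  by_contra hk; exact absurd (le_degL hk) (not_le.mpr h)

lemma coeff_eq_zero_of_lt_ldegL {a : LP} {k : ℤ} (h : k < ldegL a) : coeff a k = 0 := by
  by_contra hk; exact absurd (ldegL_le hk) (not_le.mpr h)

lemma coeff_mul_degL {a b : LP} (ha : a ≠ 0) (hb : b ≠ 0) :
    coeff (a * b) (degL a + degL b) = coeff a (degL a) * coeff b (degL b) := by
  apply AddMonoidAlgebra.coeff_mul_add_of_uniqueAdd
  intro x y hx hy hxy
  have h1 : x ≤ degL a := le_degL (Finsupp.mem_support_iff.mp hx)
  have h2 : y ≤ degL b := le_degL (Finsupp.mem_support_iff.mp hy)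
  constructor <;> omega

lemma coeff_mul_ldegL {a b : LP} (ha : a ≠ 0) (hb : b ≠ 0) :
    coeff (a * b) (ldegL a + ldegL b) = coeff a (ldegL a) * coeff b (ldegL b) := by
  apply AddMonoidAlgebra.coeff_mul_add_of_uniqueAdd
  intro x y hx hy hxy
  have h1 : ldegL a ≤ x := ldegL_le (Finsupp.mem_support_iff.mp hx)
  have h2 : ldegL b ≤ y := ldegL_le (Finsupp.mem_support_iff.mp hy)
  constructor <;> omega

lemma degL_mul {a b : LP} (ha : a ≠ 0) (hb : b ≠ 0) :
    degL (a * b) = degL a + degL b := by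
  have hc : coeff (a * b) (degL a + degL b) ≠ 0 := by
    rw [coeff_mul_degL ha hb]
    exact mul_ne_zero (coeff_degL ha) (coeff_degL hb)
  refine le_antisymm ?_ (le_degL hc)
  have hab : a * b ≠ 0 := by rintro h; rw [h] at hc; exact hc rfl
  have hmem := Finsupp.mem_support_iff.mpr (coeff_degL hab)
  have := AddMonoidAlgebra.support_coeff_mul_subset a b hmem
  rw [Finset.mem_add] at this
  obtain ⟨x, hx, y, hy, hxy⟩ := this
  have h1 : x ≤ degL a := le_degL (Finsupp.mem_support_iff.mp hx)
  have h2 : y ≤ degL b := le_degL (Finsupp.mem_support_iff.mp hy)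
  omega

lemma ldegL_mul {a b : LP} (ha : a ≠ 0) (hb : b ≠ 0) :
    ldegL (a * b) = ldegL a + ldegL b := by
  have hc : coeff (a * b) (ldegL a + ldegL b) ≠ 0 := by
    rw [coeff_mul_ldegL ha hb]
    exact mul_ne_zero (coeff_ldegL ha) (coeff_ldegL hb)
  refine le_antisymm (ldegL_le hc) ?_
  have hab : a * b ≠ 0 := by rintro h; rw [h] at hc; exact hc rfl
  have hmem := Finsupp.mem_support_iff.mpr (coeff_ldegL hab)
  have := AddMonoidAlgebra.support_coeff_mul_subset a b hmem
  rw [Finset.mem_add] at this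
  obtain ⟨x, hx, y, hy, hxy⟩ := this
  have h1 : ldegL a ≤ x := ldegL_le (Finsupp.mem_support_iff.mp hx)
  have h2 : ldegL b ≤ y := ldegL_le (Finsupp.mem_support_iff.mp hy)
  omega

lemma leadCoeff_mul {a b : LP} (ha : a ≠ 0) (hb : b ≠ 0) :
    coeff (a * b) (degL (a * b)) = coeff a (degL a) * coeff b (degL b) := by
  rw [degL_mul ha hb, coeff_mul_degL ha hb]

lemma trailCoeff_mul {a b : LP} (ha : a ≠ 0) (hb : b ≠ 0) :
    coeff (a * b) (ldegL (a * b)) = coeff a (ldegL a) * coeff b (ldegL b) := by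
  rw [ldegL_mul ha hb, coeff_mul_ldegL ha hb]

lemma degL_hstar {a : LP} (ha : a ≠ 0) : degL (hstar a) = -ldegL a := by
  have h1 : coeff (hstar a) (-ldegL a) ≠ 0 := by
    rw [coeff_hstar, neg_neg]
    simpa using coeff_ldegL ha
  refine le_antisymm ?_ (le_degL h1)
  have hs : hstar a ≠ 0 := hstar_ne_zero ha
  have h2 : coeff a (-(degL (hstar a))) ≠ 0 := by
    have := coeff_degL hs
    rw [coeff_hstar] at this
    simpa using fun h => this (by rw [h]; exact map_zero _)
  have := ldegL_le h2
  omega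

lemma ldegL_hstar {a : LP} (ha : a ≠ 0) : ldegL (hstar a) = -degL a := by
  have h1 : coeff (hstar a) (-degL a) ≠ 0 := by
    rw [coeff_hstar, neg_neg]
    simpa using coeff_degL ha
  refine le_antisymm (ldegL_le h1) ?_
  have hs : hstar a ≠ 0 := hstar_ne_zero ha
  have h2 : coeff a (-(ldegL (hstar a))) ≠ 0 := by
    have := coeff_ldegL hs
    rw [coeff_hstar] at this
    simpa using fun h => this (by rw [h]; exact map_zero _)
  have := le_degL h2
  omega

lemma coeff_hstar_degL {a : LP} (ha : a ≠ 0) :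
    coeff (hstar a) (degL (hstar a)) = (starRingEnd ℂ) (coeff a (ldegL a)) := by
  rw [degL_hstar ha, coeff_hstar, neg_neg]

lemma coeff_hstar_ldegL {a : LP} (ha : a ≠ 0) :
    coeff (hstar a) (ldegL (hstar a)) = (starRingEnd ℂ) (coeff a (degL a)) := by
  rw [ldegL_hstar ha, coeff_hstar, neg_neg]

end Deg
section Sym

lemma Sgn.ne_zero {ε : ℂ} (h : Sgn ε) : ε ≠ 0 := by
  rcases h with rfl | rfl <;> norm_num

lemma Sgn.mul_self {ε : ℂ} (h : Sgn ε) : ε * ε = 1 := by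
  rcases h with rfl | rfl <;> norm_num

lemma Sgn.conj {ε : ℂ} (h : Sgn ε) : (starRingEnd ℂ) ε = ε := by
  rcases h with rfl | rfl <;> simp

lemma Sgn.mul {ε δ : ℂ} (h : Sgn ε) (h' : Sgn δ) : Sgn (ε * δ) := by
  rcases h with rfl | rfl <;> rcases h' with rfl | rfl <;> simp [Sgn] <;> norm_num

lemma symT_iff {a : LP} {ε : ℂ} {c : ℤ} :
    SymT a ε c ↔ a = AddMonoidAlgebra.single c ε * reflLP a := by
  constructor
  · intro h
    apply lp_ext; intro k
    rw [coeff_single_mul, coeff_refl]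
    rw [h k]
    congr 2
    omega
  · intro h k
    conv_lhs => rw [h]
    rw [coeff_single_mul, coeff_refl]
    congr 2
    omega

lemma symT_mul {a b : LP} {ε δ : ℂ} {c e : ℤ}
    (ha : SymT a ε c) (hb : SymT b δ e) : SymT (a * b) (ε * δ) (c + e) := by
  rw [symT_iff] at ha hb ⊢
  conv_lhs => rw [ha, hb]
  rw [refl_mul]
  rw [show (AddMonoidAlgebra.single c ε : LP) * reflLP a * (AddMonoidAlgebra.single e δ * reflLP b)
      = AddMonoidAlgebra.single c ε * AddMonoidAlgebra.single e δ * (reflLP a * reflLP b) by ring]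
  rw [AddMonoidAlgebra.single_mul_single]

lemma refl_single_mul_cancel {a : LP} {ε : ℂ} {c : ℤ} (hε : ε * ε = 1)
    (h : a = AddMonoidAlgebra.single c ε * reflLP a) :
    reflLP a = AddMonoidAlgebra.single (-c) ε * a := by
  conv_lhs => rw [h]
  rw [refl_mul, refl_single, refl_refl]

lemma symT_of_mul_left {g w : LP} {ε δ : ℂ} {c e : ℤ}
    (hg :  g ≠ 0) (hδ : δ * δ = 1)
    (h : SymT (g * w) ε c) (hsg : SymT g δ e) : SymT w (ε * δ) (c - e) := by
  rw [symT_iff] at h hsg ⊢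
  have hrg := refl_single_mul_cancel hδ hsg
  rw [refl_mul, hrg] at h
  apply mul_left_cancel₀ hg
  conv_lhs => rw [h]
  rw [show (AddMonoidAlgebra.single c ε : LP) * (AddMonoidAlgebra.single (-e) δ * g * reflLP w)
      = (AddMonoidAlgebra.single c ε * AddMonoidAlgebra.single (-e) δ) * (g * reflLP w) by ring]
  rw [AddMonoidAlgebra.single_mul_single]
  rw [show (AddMonoidAlgebra.single (c + -e) (ε * δ) : LP) * (g * reflLP w)
      = g * (AddMonoidAlgebra.single (c + -e) (ε * δ) * reflLP w) by ring]
  rw [show c + -e = c - e by ring]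

lemma symT_hstar {a : LP} {ε : ℂ} {c : ℤ} (hε : (starRingEnd ℂ) ε = ε)
    (h : SymT a ε c) : SymT (hstar a) ε (-c) := by
  intro k
  rw [coeff_hstar, coeff_hstar, h (-k), _root_.map_mul, hε]
  congr 3
  omega

lemma symT_degL {a : LP} {ε : ℂ} {c : ℤ} (ha : a ≠ 0) (hε : ε ≠ 0) (h : SymT a ε c) :
    ldegL a = c - degL a ∧ coeff a (degL a) = ε * coeff a (ldegL a) := by
  have key : ∀ k : ℤ, coeff a k ≠ 0 → coeff a (c - k) ≠ 0 := by
    intro k hk h0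
    rw [h k, h0, mul_zero] at hk
    exact hk rfl
  have h1 : ldegL a ≤ c - degL a := ldegL_le (key _ (coeff_degL ha))
  have h2 : c - ldegL a ≤ degL a := le_degL (key _ (coeff_ldegL ha))
  have hld : ldegL a = c - degL a := by omega
  refine ⟨hld, ?_⟩
  rw [h (degL a), hld]

end Sym

section Units

lemma degL_single {n : ℤ} {c : ℂ} (hc : c ≠ 0) :
    degL (AddMonoidAlgebra.single n c : LP) = n := by
  have h1 : coeff (AddMonoidAlgebra.single n c : LP) n ≠ 0 := by
    rw [coeff_single, if_pos rfl]; exact hc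
  refine le_antisymm ?_ (le_degL h1)
  by_contra hlt
  push_neg at hlt
  have h2 := coeff_degL (a := (AddMonoidAlgebra.single n c : LP))
    (fun h0 => h1 (by rw [h0]; rfl))
  rw [coeff_single, if_neg (by omega)] at h2
  exact h2 rfl

lemma ldegL_single {n : ℤ} {c : ℂ} (hc : c ≠ 0) :
    ldegL (AddMonoidAlgebra.single n c : LP) = n := by
  have h1 : coeff (AddMonoidAlgebra.single n c : LP) n ≠ 0 := by
    rw [coeff_single, if_pos rfl]; exact hc
  refine le_antisymm (ldegL_le h1) ?_
  by_contra hlt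
  push_neg at hlt
  have h2 := coeff_ldegL (a := (AddMonoidAlgebra.single n c : LP))
    (fun h0 => h1 (by rw [h0]; rfl))
  rw [coeff_single, if_neg (by omega)] at h2
  exact h2 rfl

lemma one_eq_single : (1 : LP) = AddMonoidAlgebra.single 0 1 := rfl

lemma one_ne_zero' : (1 : LP) ≠ 0 := by
  intro h
  have := congrArg (fun x : LP => coeff x 0) h
  rw [one_eq_single] at this
  simp only [coeff_single, if_pos rfl] at this
  exact one_ne_zero this

lemma degL_one : degL (1 : LP) = 0 := by
  rw [one_eq_single, degL_single one_ne_zero]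

lemma ldegL_one : ldegL (1 : LP) = 0 := by
  rw [one_eq_single, ldegL_single one_ne_zero]

lemma eq_single_of_isUnit {w : LP} (h : IsUnit w) :
    ∃ (n : ℤ) (lam : ℂ), lam ≠ 0 ∧ w = AddMonoidAlgebra.single n lam := by
  obtain ⟨wu, rfl⟩ := h
  set w := (wu : LP) with hwdef
  have hw1 : w * (wu⁻¹ : LPˣ) = 1 := wu.mul_inv
  have hw : w ≠ 0 := by
    intro h0; rw [h0, zero_mul] at hw1; exact one_ne_zero' hw1.symm
  have hw' : ((wu⁻¹ : LPˣ) : LP) ≠ 0 := by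
    intro h0; rw [h0, mul_zero] at hw1; exact one_ne_zero' hw1.symm
  have hd := degL_mul hw hw'
  have hl := ldegL_mul hw hw'
  rw [hw1, degL_one] at hd
  rw [hw1, ldegL_one] at hl
  have e1 : ldegL w ≤ degL w := ldegL_le_degL hw
  have e2 : ldegL ((wu⁻¹ : LPˣ) : LP) ≤ degL ((wu⁻¹ : LPˣ) : LP) := ldegL_le_degL hw'
  have heq : ldegL w = degL w := by omega
  refine ⟨degL w, coeff w (degL w), coeff_degL hw, ?_⟩
  apply lp_ext; intro k
  rw [coeff_single]
  rcases eq_or_ne (degL w) k with rfl | hne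
  · simp
  · rw [if_neg hne]
    rcases lt_or_gt_of_ne hne with hlt | hgt
    · exact coeff_eq_zero_of_degL_lt hlt
    · exact coeff_eq_zero_of_lt_ldegL (by omega)

end Units
instance : IsDomain LP := NoZeroDivisors.to_isDomain _

section Gcd

lemma dvd_of_dvd_single_mul {a b : LP} {c : ℤ} {ε : ℂ} (hε : ε * ε = 1)
    (h : a ∣ AddMonoidAlgebra.single c ε * b) : a ∣ b := by
  refine h.trans ⟨AddMonoidAlgebra.single (-c) ε, ?_⟩
  have h1 : (AddMonoidAlgebra.single c ε : LP) * AddMonoidAlgebra.single (-c) ε = 1 := by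
    rw [AddMonoidAlgebra.single_mul_single, show c + -c = 0 by ring, hε, ← one_eq_single]
  rw [show (AddMonoidAlgebra.single c ε : LP) * b * AddMonoidAlgebra.single (-c) ε
      = AddMonoidAlgebra.single c ε * AddMonoidAlgebra.single (-c) ε * b by ring, h1, one_mul]

lemma exists_gcd (u v : LP) (hu : u ≠ 0) :
    ∃ g u₁ v₁ : LP, g ≠ 0 ∧ u = g * u₁ ∧ v = g * v₁ ∧ IsCoprime u₁ v₁ ∧
      ∀ e : LP, e ∣ u → e ∣ v → e ∣ g := by
  obtain ⟨n, p, hp⟩ := LaurentPolynomial.exists_T_pow u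
  obtain ⟨m, q, hq⟩ := LaurentPolynomial.exists_T_pow v
  set g : LP := Polynomial.toLaurent (EuclideanDomain.gcd p q) with hgdef
  have hp0 : p ≠ 0 := by
    intro h0
    rw [h0, map_zero] at hp
    exact (mul_ne_zero hu (isUnit_T (n : ℤ)).ne_zero) hp.symm
  have hg : g ≠ 0 := by
    rw [hgdef, Ne, Polynomial.toLaurent_eq_zero]
    intro h0
    exact hp0 (EuclideanDomain.gcd_eq_zero_iff.mp h0).1
  have hgu : g ∣ u := by
    obtain ⟨k, hk⟩ := EuclideanDomain.gcd_dvd_left p q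
    refine ⟨Polynomial.toLaurent k * T (-(n : ℤ)), ?_⟩
    have h1 : u * T (n : ℤ) = g * Polynomial.toLaurent k := by
      rw [← hp, hk, _root_.map_mul]
    calc u = u * T (n : ℤ) * T (-(n : ℤ)) := by
            rw [mul_assoc, ← T_add, show (n : ℤ) + -(n : ℤ) = 0 by ring, T_zero, mul_one]
    _ = g * (Polynomial.toLaurent k * T (-(n : ℤ))) := by rw [h1, mul_assoc]
  have hgv : g ∣ v := by
    obtain ⟨k, hk⟩ := EuclideanDomain.gcd_dvd_right p q
    refine ⟨Polynomial.toLaurent k * T (-(m : ℤ)), ?_⟩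
    have h1 : v * T (m : ℤ) = g * Polynomial.toLaurent k := by
      rw [← hq, hk, _root_.map_mul]
    calc v = v * T (m : ℤ) * T (-(m : ℤ)) := by
            rw [mul_assoc, ← T_add, show (m : ℤ) + -(m : ℤ) = 0 by ring, T_zero, mul_one]
    _ = g * (Polynomial.toLaurent k * T (-(m : ℤ))) := by rw [h1, mul_assoc]
  obtain ⟨u₁, hu1⟩ := hgu
  obtain ⟨v₁, hv1⟩ := hgv
  have hBL : g = u * (T (n : ℤ) * Polynomial.toLaurent (EuclideanDomain.gcdA p q))
      + v * (T (m : ℤ) * Polynomial.toLaurent (EuclideanDomain.gcdB p q)) := by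
    have h2 := congrArg Polynomial.toLaurent (EuclideanDomain.gcd_eq_gcd_ab p q)
    rw [map_add, _root_.map_mul, _root_.map_mul, hp, hq] at h2
    rw [hgdef, h2]; ring
  refine ⟨g, u₁, v₁, hg, hu1, hv1, ?_, ?_⟩
  · refine ⟨T (n : ℤ) * Polynomial.toLaurent (EuclideanDomain.gcdA p q),
      T (m : ℤ) * Polynomial.toLaurent (EuclideanDomain.gcdB p q), ?_⟩
    apply mul_left_cancel₀ hg
    rw [mul_one]
    conv_rhs => rw [hBL]
    rw [hu1, hv1]
    ring
  · intro e heu hev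
    rw [hBL]
    exact dvd_add (heu.mul_right _) (hev.mul_right _)

end Gcd

lemma hstarRH_apply (a : LP) : hstarRH a = hstar a := rfl

lemma sign_eq_of_pos_eq {s t : ℂ} {x y : ℝ} (hs : Sgn s) (ht : Sgn t)
    (hx : 0 < x) (hy : 0 < y) (h : s * (x : ℂ) = t * (y : ℂ)) : s = t := by
  rcases hs with rfl | rfl <;> rcases ht with rfl | rfl <;> try rfl
  · exfalso
    rw [one_mul, neg_one_mul] at h
    have hxy : x = -y := by exact_mod_cast h
    nlinarith
  · exfalso
    rw [one_mul, neg_one_mul] at h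
    have hxy : -x = y := by exact_mod_cast h
    nlinarith
/-- factorizing `u u⋆ / (v v⋆)` as `d d⋆` with symmetry
(Lemma 3.14 of the paper). -/
theorem quotient_of_hermitian_squares
    (u v : LP) (hu : u ≠ 0) (hv : v ≠ 0)
    (εu εv : ℂ) (cu cv : ℤ) (hεu : Sgn εu) (hεv : Sgn εv)
    (hsu : SymT u εu cu) (hsv : SymT v εv cv)
    (hdvd : v * hstar v ∣ u * hstar u) :
    (∃ d : LP, HasSym d ∧ d * hstar d * (v * hstar v) = u * hstar u) ∧
    (∀ (d : LP) (εd : ℂ) (cd : ℤ), Sgn εd → SymT d εd cd →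
      d * hstar d * (v * hstar v) = u * hstar u →
      ∃ k : ℤ, εd = εu * εv ∧ cd = 2 * k + cu - cv) := by
  have hus : hstar u ≠ 0 := hstar_ne_zero hu
  have hvs : hstar v ≠ 0 := hstar_ne_zero hv
  have huu : u * hstar u ≠ 0 := mul_ne_zero hu hus
  have hvv : v * hstar v ≠ 0 := mul_ne_zero hv hvs
  constructor
  · -- existence
    obtain ⟨g, u₁, v₁, hg, hu1, hv1, hcop, hgcd⟩ := exists_gcd u v hu
    have hu₁ : u₁ ≠ 0 := fun h => hu (by rw [hu1, h, mul_zero])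
    have hv₁ : v₁ ≠ 0 := fun h => hv (by rw [hv1, h, mul_zero])
    -- the gcd has symmetry
    have hrgu : reflLP g ∣ u := by
      have h1 : reflLP g ∣ reflLP u := refl_dvd ⟨u₁, hu1⟩
      rw [refl_single_mul_cancel hεu.mul_self (symT_iff.mp hsu)] at h1
      exact dvd_of_dvd_single_mul hεu.mul_self h1
    have hrgv : reflLP g ∣ v := by
      have h1 : reflLP g ∣ reflLP v := refl_dvd ⟨v₁, hv1⟩
      rw [refl_single_mul_cancel hεv.mul_self (symT_iff.mp hsv)] at h1
      exact dvd_of_dvd_single_mul hεv.mul_self h1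
    have hrg_dvd_g : reflLP g ∣ g := hgcd _ hrgu hrgv
    have hg_dvd_rg : g ∣ reflLP g := by
      have h1 := refl_dvd hrg_dvd_g
      rwa [refl_refl] at h1
    obtain ⟨w, hw⟩ := associated_of_dvd_dvd hg_dvd_rg hrg_dvd_g
    obtain ⟨mm, lam, hlam, hwe⟩ := eq_single_of_isUnit w.isUnit
    have hrg : reflLP g = AddMonoidAlgebra.single mm lam * g := by
      rw [← hw, hwe]; ring
    have h0 : AddMonoidAlgebra.single 0 (lam * lam) * g = g := by
      conv_rhs => rw [← refl_refl g, hrg, refl_mul, refl_single, hrg, ← mul_assoc,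
        AddMonoidAlgebra.single_mul_single, show -mm + mm = 0 by ring]
    have hlam2 : lam * lam = 1 := by
      have h1 : AddMonoidAlgebra.single 0 (lam * lam) * g
          = AddMonoidAlgebra.single 0 (1 : ℂ) * g := by
        rw [h0, ← one_eq_single, one_mul]
      have h2 := mul_right_cancel₀ hg h1
      have h3 : coeff (AddMonoidAlgebra.single 0 (lam * lam) : LP) 0
          = coeff (AddMonoidAlgebra.single 0 (1 : ℂ) : LP) 0 := by rw [h2]
      rw [coeff_single, coeff_single, if_pos rfl, if_pos rfl] at h3
      exact h3
    have hlamSgn : Sgn lam := mul_self_eq_one_iff.mp hlam2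
    have hsg : SymT g lam (-mm) := by
      rw [symT_iff]
      rw [hrg, ← mul_assoc, AddMonoidAlgebra.single_mul_single,
        show -mm + mm = 0 by ring, hlam2, ← one_eq_single, one_mul]
    -- symmetry of the cofactors
    have hsu₁ : SymT u₁ (εu * lam) (cu - -mm) :=
      symT_of_mul_left hg hlam2 (hu1 ▸ hsu) hsg
    have hsv₁ : SymT v₁ (εv * lam) (cv - -mm) :=
      symT_of_mul_left hg hlam2 (hv1 ▸ hsv) hsg
    -- divisibility after cancelling g
    obtain ⟨t, ht⟩ := hdvd
    have hgg : g * hstar g ≠ 0 := mul_ne_zero hg (hstar_ne_zero hg)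
    have hcanc : u₁ * hstar u₁ = v₁ * hstar v₁ * t := by
      apply mul_left_cancel₀ hgg
      have e1 : g * hstar g * (u₁ * hstar u₁) = u * hstar u := by
        rw [hu1, hstar_mul]; ring
      have e2 : g * hstar g * (v₁ * hstar v₁ * t) = v * hstar v * t := by
        rw [hv1, hstar_mul]; ring
      rw [e1, e2, ht]
    have hv₁s_dvd : hstar v₁ ∣ u₁ := by
      have hcops : IsCoprime (hstar v₁) (hstar u₁) := by
        have := hcop.map hstarRH
        rw [hstarRH_apply, hstarRH_apply] at this
        exact this.symm
      exact hcops.dvd_of_dvd_mul_right ⟨v₁ * t, by rw [hcanc]; ring⟩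
    obtain ⟨d, hd⟩ := hv₁s_dvd
    have hsv₁s : SymT (hstar v₁) (εv * lam) (-(cv - -mm)) :=
      symT_hstar (hεv.mul hlamSgn).conj hsv₁
    have hsd : SymT d ((εu * lam) * (εv * lam)) ((cu - -mm) - -(cv - -mm)) :=
      symT_of_mul_left (hstar_ne_zero hv₁) (hεv.mul hlamSgn).mul_self
        (hd ▸ hsu₁) hsv₁s
    refine ⟨d, ⟨_, _, (hεu.mul hlamSgn).mul (hεv.mul hlamSgn), hsd⟩, ?_⟩
    rw [hu1, hd, hv1, hstar_mul, hstar_mul, hstar_mul, hstar_hstar]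
    ring
  · -- classification of symmetry types
    intro d εd cd hεd hsd heq
    have hd : d ≠ 0 := by
      rintro rfl
      rw [zero_mul, zero_mul] at heq
      exact huu heq.symm
    have hds : hstar d ≠ 0 := hstar_ne_zero hd
    have hdd : d * hstar d ≠ 0 := mul_ne_zero hd hds
    obtain ⟨hld, hcd⟩ := symT_degL hd hεd.ne_zero hsd
    obtain ⟨hlu, hcu'⟩ := symT_degL hu hεu.ne_zero hsu
    obtain ⟨hlv, hcv'⟩ := symT_degL hv hεv.ne_zero hsv
    -- degree identity
    have hdeg := congrArg degL heq
    rw [degL_mul hdd hvv, degL_mul hd hds, degL_mul hv hvs, degL_mul hu hus,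
      degL_hstar hd, degL_hstar hv, degL_hstar hu] at hdeg
    -- leading coefficient identity
    have h1 : coeff (d * hstar d * (v * hstar v)) (degL (d * hstar d * (v * hstar v)))
        = (coeff d (degL d) * (starRingEnd ℂ) (coeff d (ldegL d)))
          * (coeff v (degL v) * (starRingEnd ℂ) (coeff v (ldegL v))) := by
      rw [leadCoeff_mul hdd hvv, leadCoeff_mul hd hds, leadCoeff_mul hv hvs,
        coeff_hstar_degL hd, coeff_hstar_degL hv]
    have h2 : coeff (u * hstar u) (degL (u * hstar u))
        = coeff u (degL u) * (starRingEnd ℂ) (coeff u (ldegL u)) := by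
      rw [leadCoeff_mul hu hus, coeff_hstar_degL hu]
    rw [heq, h2] at h1
    rw [hcd, hcu', hcv'] at h1
    set bd := coeff d (ldegL d) with hbd_def
    set bu := coeff u (ldegL u) with hbu_def
    set bv := coeff v (ldegL v) with hbv_def
    have hbd : bd ≠ 0 := coeff_ldegL hd
    have hbu : bu ≠ 0 := coeff_ldegL hu
    have hbv : bv ≠ 0 := coeff_ldegL hv
    have key : εu * ((Complex.normSq bu : ℝ) : ℂ)
        = (εd * εv) * ((Complex.normSq bd * Complex.normSq bv : ℝ) : ℂ) := by
      rw [Complex.ofReal_mul, ← Complex.mul_conj, ← Complex.mul_conj, ← Complex.mul_conj]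
      linear_combination h1
    have hsgn : εd * εv = εu := by
      refine (sign_eq_of_pos_eq (hεd.mul hεv) hεu ?_ ?_ key.symm)
      · exact mul_pos (Complex.normSq_pos.mpr hbd) (Complex.normSq_pos.mpr hbv)
      · exact Complex.normSq_pos.mpr hbu
    refine ⟨ldegL d - ldegL u + ldegL v, ?_, by omega⟩
    rw [← hsgn, mul_assoc, hεv.mul_self, mul_one]

end QT
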